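/- Let p, u, q ∈ [0,1] and i ≥ 1. With Y as in the OR-dilution-noise model on K items, conditional on the Hamming weight of a fixed subset of K-i of the X variables being l, the probability that Y = 0 equals (1-q)·u^l·(1 - p + p·u)^i. -/

import Mathlib

open Finset

/-- Probability mass of an outcome `(x, d, z)` in the noisy group testing
model: the `x`'s are i.i.d. Bernoulli(p), the `d`'s i.i.d. Bernoulli(1-u),
and `z` is Bernoulli(q), all independent. -/
def gtProb (K : ℕ) (p u q : ℝ)
    (ω : (Fin K → Bool) × (Fin K → Bool) × Bool) : ℝ :=
  (∏ m : Fin K, if ω.1 m then p else 1 - p) *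
  (∏ m : Fin K, if ω.2.1 m then 1 - u else u) *
  (if ω.2.2 then q else 1 - q)

/-- The test outcome Y = (⋁_m (X_m ∧ D_m)) ∨ Z. -/
def gtY (K : ℕ) (ω : (Fin K → Bool) × (Fin K → Bool) × Bool) : Bool :=
  (decide (∃ m : Fin K, ω.1 m ∧ ω.2.1 m)) || ω.2.2


private lemma sum_fun_bool {α : Type*} [Fintype α] [DecidableEq α] (F : α → Bool → ℝ) :
    ∑ x : α → Bool, ∏ m, F m (x m) = ∏ m, (F m true + F m false) := by
  have : ∀ m : α, F m true + F m false = ∑ b : Bool, F m b := by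
    intro m; rw [Fintype.sum_bool]
  simp_rw [this]
  rw [Finset.prod_univ_sum (fun _ => (Finset.univ : Finset Bool)) (fun m b => F m b)]
  rw [Fintype.piFinset_univ]

private lemma weight_sum (K : ℕ) (S : Finset (Fin K)) (l : ℕ) (A B : ℝ) :
    ∑ x ∈ Finset.univ.filter
        (fun x : Fin K → Bool => (S.filter fun m => x m).card = l),
      ∏ m, (if x m then A else B)
    = (S.card.choose l : ℝ) * A ^ l * B ^ (S.card - l) * (A + B) ^ (K - S.card) := by
  classical
  have h1 : ∑ x ∈ Finset.univ.filter
        (fun x : Fin K → Bool => (S.filter fun m => x m).card = l),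
      ∏ m, (if x m then A else B)
      = ∑ T ∈ Finset.univ.filter (fun T : Finset (Fin K) => (S ∩ T).card = l),
          A ^ T.card * B ^ (K - T.card) := by
    refine Finset.sum_nbij' (fun x => Finset.univ.filter (fun m => x m))
      (fun T => fun m => decide (m ∈ T)) ?_ ?_ ?_ ?_ ?_
    · intro x hx
      simp only [mem_filter, mem_univ, true_and] at hx ⊢
      have : S ∩ Finset.univ.filter (fun m => x m) = S.filter (fun m => x m) := by
        ext m; simp
      rw [this, hx]
    · intro T hT
      simp only [mem_filter, mem_univ, true_and] at hT ⊢
      have : S.filter (fun m => decide (m ∈ T) = true) = S ∩ T := by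
        ext m; simp
      simpa [this, Finset.filter_mem_eq_inter] using hT
    · intro x _; funext m; simp
    · intro T _; ext m; simp
    · intro x _
      rw [Finset.prod_ite (fun _ => A) (fun _ => B), Finset.prod_const, Finset.prod_const]
      congr 1
      have : Finset.univ.filter (fun m => ¬ x m) = (Finset.univ.filter (fun m => x m))ᶜ := by
        ext m; simp
      rw [this, Finset.card_compl, Fintype.card_fin]
  rw [h1]
  by_cases hl : l ≤ S.card
  · have h2 : ∑ T ∈ Finset.univ.filter (fun T : Finset (Fin K) => (S ∩ T).card = l),
          A ^ T.card * B ^ (K - T.card)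
        = ∑ ab ∈ (S.powersetCard l) ×ˢ Sᶜ.powerset,
            A ^ (l + ab.2.card) * B ^ (K - l - ab.2.card) := by
      refine Finset.sum_nbij' (fun T => (S ∩ T, T \ S)) (fun ab => ab.1 ∪ ab.2) ?_ ?_ ?_ ?_ ?_
      · intro T hT
        simp only [mem_filter, mem_univ, true_and] at hT
        simp only [Finset.mem_product, Finset.mem_powersetCard, Finset.mem_powerset]
        refine ⟨⟨Finset.inter_subset_left, hT⟩, ?_⟩
        intro m hm
        simp only [Finset.mem_sdiff] at hm
        simp [hm.2]
      · intro ab hab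
        simp only [Finset.mem_product, Finset.mem_powersetCard, Finset.mem_powerset] at hab
        simp only [mem_filter, mem_univ, true_and]
        have hdisj : S ∩ ab.2 = ∅ := by
          ext m
          simp only [Finset.mem_inter, Finset.notMem_empty, iff_false]
          rintro ⟨h1', h2'⟩
          exact absurd h1' (by simpa using hab.2 h2')
        have : S ∩ (ab.1 ∪ ab.2) = ab.1 := by
          rw [Finset.inter_union_distrib_left, hdisj, Finset.union_empty,
            Finset.inter_eq_right.2 hab.1.1]
        rw [this, hab.1.2]
      · intro T _
        ext m
        simp only [Finset.mem_union, Finset.mem_inter, Finset.mem_sdiff]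
        tauto
      · intro ab hab
        simp only [Finset.mem_product, Finset.mem_powersetCard, Finset.mem_powerset] at hab
        have h2' : ∀ m ∈ ab.2, m ∉ S := by intro m hm; simpa using hab.2 hm
        ext1
        · ext m
          simp only [Finset.mem_inter, Finset.mem_union]
          constructor
          · rintro ⟨hS', h | h⟩
            · exact h
            · exact absurd hS' (h2' m h)
          · intro h; exact ⟨hab.1.1 h, Or.inl h⟩
        · ext m
          simp only [Finset.mem_sdiff, Finset.mem_union]
          constructor
          · rintro ⟨h | h, hS'⟩
            · exact absurd (hab.1.1 h) hS'
            · exact h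
          · intro h; exact ⟨Or.inr h, h2' m h⟩
      · intro T hT
        simp only [mem_filter, mem_univ, true_and] at hT
        have hcard : T.card = l + (T \ S).card := by
          have h3 : (T \ S).card + (S ∩ T).card = T.card := by
            rw [Finset.inter_comm S T]; exact Finset.card_sdiff_add_card_inter T S
          omega
        have he : K - T.card = K - l - (T \ S).card := by omega
        show A ^ T.card * B ^ (K - T.card)
          = A ^ (l + (T \ S).card) * B ^ (K - l - (T \ S).card)
        rw [he, hcard]
    rw [h2, Finset.sum_product]
    have hSc : Sᶜ.card = K - S.card := by
      rw [Finset.card_compl, Fintype.card_fin]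
    have hinner : ∀ a ∈ S.powersetCard l,
        ∑ b ∈ Sᶜ.powerset, A ^ (l + b.card) * B ^ (K - l - b.card)
        = A ^ l * B ^ (S.card - l) * (A + B) ^ (K - S.card) := by
      intro a _
      have hstep : ∀ b ∈ Sᶜ.powerset,
          A ^ (l + b.card) * B ^ (K - l - b.card)
          = (A ^ l * B ^ (S.card - l)) * (A ^ b.card * B ^ (Sᶜ.card - b.card)) := by
        intro b hb
        have hb' : b.card ≤ Sᶜ.card := Finset.card_le_card (Finset.mem_powerset.1 hb)
        have hScard : S.card ≤ K := Finset.card_le_card (Finset.subset_univ S) |>.trans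
          (by rw [Finset.card_univ, Fintype.card_fin])
        have : K - l - b.card = (S.card - l) + (Sᶜ.card - b.card) := by omega
        rw [this, pow_add, pow_add]
        ring
      rw [Finset.sum_congr rfl hstep, ← Finset.mul_sum]
      congr 1
      rw [← hSc]
      have hpa := Finset.prod_add (fun _ : Fin K => A) (fun _ : Fin K => B) Sᶜ
      simp only [Finset.prod_const] at hpa
      rw [hpa]
      refine Finset.sum_congr rfl ?_
      intro t ht
      congr 1
      rw [Finset.card_sdiff_of_subset (Finset.mem_powerset.1 ht)]
    rw [Finset.sum_congr rfl hinner, Finset.sum_const, Finset.card_powersetCard, nsmul_eq_mul]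
    ring
  · have hempty : Finset.univ.filter (fun T : Finset (Fin K) => (S ∩ T).card = l) = ∅ := by
      ext T
      simp only [mem_filter, mem_univ, true_and, Finset.notMem_empty, iff_false]
      intro h
      have : (S ∩ T).card ≤ S.card := Finset.card_le_card Finset.inter_subset_left
      omega
    rw [hempty, Finset.sum_empty, Nat.choose_eq_zero_of_lt (by omega)]
    simp

/-- Conditional on the Hamming weight of the X-variables indexed by a fixed
set S of size K - i being l, the probability that Y = 0 equals
(1-q)·u^l·(1-p+pu)^i, expressed as
P(Y = 0 ∧ w(X_S) = l) = (1-q)·u^l·(1-p+pu)^i · P(w(X_S) = l). -/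
theorem prob_Y_eq_zero_given_subset_weight (K i : ℕ) (hi : 1 ≤ i) (hiK : i ≤ K)
    (p u q : ℝ) (hp : p ∈ Set.Icc (0:ℝ) 1) (hu : u ∈ Set.Icc (0:ℝ) 1)
    (hq : q ∈ Set.Icc (0:ℝ) 1) (S : Finset (Fin K)) (hS : S.card = K - i)
    (l : ℕ) :
    ∑ ω ∈ Finset.univ.filter
        (fun ω : (Fin K → Bool) × (Fin K → Bool) × Bool =>
          gtY K ω = false ∧ (S.filter fun m => ω.1 m).card = l),
        gtProb K p u q ω
      = (1 - q) * u ^ l * (1 - p + p * u) ^ i *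
        ∑ ω ∈ Finset.univ.filter
          (fun ω : (Fin K → Bool) × (Fin K → Bool) × Bool =>
            (S.filter fun m => ω.1 m).card = l), gtProb K p u q ω := by
  classical
  have hScard : S.card ≤ K := by
    have := Finset.card_le_card (Finset.subset_univ S)
    simpa [Finset.card_univ] using this
  -- Right-hand side inner sum
  have hR : ∑ ω ∈ Finset.univ.filter
          (fun ω : (Fin K → Bool) × (Fin K → Bool) × Bool =>
            (S.filter fun m => ω.1 m).card = l), gtProb K p u q ω
      = ∑ x ∈ Finset.univ.filter
          (fun x : Fin K → Bool => (S.filter fun m => x m).card = l),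
          ∏ m, (if x m then p else 1 - p) := by
    rw [Finset.sum_filter, Finset.sum_filter]
    rw [Fintype.sum_prod_type]
    refine Finset.sum_congr rfl fun x _ => ?_
    by_cases hc : (S.filter fun m => x m).card = l
    · simp only [hc, if_true]
      rw [Fintype.sum_prod_type]
      have hz : ∑ z : Bool, (if z then q else 1 - q) = 1 := by
        rw [Fintype.sum_bool]; ring_nf; simp
      have hd : ∑ d : Fin K → Bool, ∏ m, (if d m then 1 - u else u) = 1 := by
        rw [sum_fun_bool (fun _ b => if b then 1 - u else u)]
        simp
      calc ∑ d : Fin K → Bool, ∑ z : Bool, gtProb K p u q (x, d, z)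
          = ∑ d : Fin K → Bool,
              ((∏ m, (if x m then p else 1 - p)) * ∏ m, (if d m then 1 - u else u))
                * ∑ z : Bool, (if z then q else 1 - q) := by
            refine Finset.sum_congr rfl fun d _ => ?_
            rw [Finset.mul_sum]
            rfl
        _ = ∏ m, (if x m then p else 1 - p) := by
            rw [hz]
            simp only [mul_one]
            rw [← Finset.mul_sum, hd, mul_one]
    · simp [hc]
  -- Left-hand side
  have hL : ∑ ω ∈ Finset.univ.filter
        (fun ω : (Fin K → Bool) × (Fin K → Bool) × Bool =>
          gtY K ω = false ∧ (S.filter fun m => ω.1 m).card = l),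
        gtProb K p u q ω
      = (1 - q) * ∑ x ∈ Finset.univ.filter
          (fun x : Fin K → Bool => (S.filter fun m => x m).card = l),
          ∏ m, (if x m then p * u else 1 - p) := by
    rw [Finset.sum_filter, Finset.mul_sum, Finset.sum_filter]
    rw [Fintype.sum_prod_type]
    refine Finset.sum_congr rfl fun x _ => ?_
    by_cases hc : (S.filter fun m => x m).card = l
    · simp only [hc, and_true, if_true]
      rw [Fintype.sum_prod_type]
      have hstep : ∀ d : Fin K → Bool,
          (∑ z : Bool, if gtY K (x, d, z) = false then gtProb K p u q (x, d, z) else 0)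
          = (1 - q) * ∏ m, ((if x m then p else 1 - p) *
              (if ¬(x m ∧ d m) then (if d m then 1 - u else u) else 0)) := by
        intro d
        rw [Fintype.sum_bool]
        have ht : gtY K (x, d, true) = true := by simp [gtY]
        rw [ht]
        simp only [if_neg (by simp : ¬(true = false)), zero_add]
        have hf : (gtY K (x, d, false) = false) ↔ ∀ m, ¬(x m ∧ d m) := by
          simp [gtY]
        by_cases hall : ∀ m, ¬(x m ∧ d m)
        · rw [if_pos (hf.2 hall)]
          have : ∀ m : Fin K, (if ¬(x m ∧ d m) then (if d m then 1 - u else u) else 0)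
              = (if d m then 1 - u else u) := fun m => if_pos (hall m)
          simp only [this]
          rw [Finset.prod_mul_distrib]
          simp [gtProb]
          ring
        · rw [if_neg (fun h => hall (hf.1 h))]
          push_neg at hall
          obtain ⟨m₀, hx₀, hd₀⟩ := hall
          rw [Finset.prod_eq_zero (Finset.mem_univ m₀), mul_zero]
          simp [hx₀, hd₀]
      rw [Finset.sum_congr rfl fun d _ => hstep d, ← Finset.mul_sum]
      congr 1
      rw [sum_fun_bool (fun m b => (if x m then p else 1 - p) *
            (if ¬(x m ∧ b) then (if b then 1 - u else u) else 0))]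
      refine Finset.prod_congr rfl fun m _ => ?_
      by_cases hx : x m <;> simp [hx] <;> ring
    · simp [hc]
  rw [hL, hR, weight_sum, weight_sum]
  have hKS : K - S.card = i := by omega
  rw [hKS]
  have h1 : p + (1 - p) = 1 := by ring
  rw [h1, one_pow]
  ring
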